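/- Let A be a ring with local units (for every finite set F ⊆ A there is an idempotent e ∈ A with ex = xe = x for all x ∈ F). If I is a maximal two-sided ideal of A, then either I is regular (I = I^⊥⊥) or I^⊥ = {0}. -/
import Mathlib

/-- The two-sided annihilator of a subset `X` of a ring `A`. -/
def perpSet {A : Type*} [NonUnitalRing A] (X : Set A) : Set A :=
  {a : A | ∀ x ∈ X, a * x = 0 ∧ x * a = 0}

/-- A ring has local units if every finite subset admits an idempotent acting as a
two-sided unit on it. -/
def HasLocalUnits (A : Type*) [NonUnitalRing A] : Prop :=
  ∀ F : Finset A, ∃ e : A, e * e = e ∧ ∀ x ∈ F, e * x = x ∧ x * e = x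

/-- `perpSet` of a set closed under left/right multiplication is a two-sided ideal. -/
def perpIdeal {A : Type*} [NonUnitalRing A] (X : Set A)
    (hl : ∀ r : A, ∀ x ∈ X, r * x ∈ X) (hr : ∀ r : A, ∀ x ∈ X, x * r ∈ X) :
    TwoSidedIdeal A :=
  TwoSidedIdeal.mk' (perpSet X)
    (fun x _ ↦ ⟨zero_mul x, mul_zero x⟩)
    (fun ha hb x hx ↦ ⟨by rw [add_mul, (ha x hx).1, (hb x hx).1, add_zero],
      by rw [mul_add, (ha x hx).2, (hb x hx).2, add_zero]⟩)
    (fun ha x hx ↦ ⟨by rw [neg_mul, (ha x hx).1, neg_zero],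
      by rw [mul_neg, (ha x hx).2, neg_zero]⟩)
    (fun {r a} ha x hx ↦ ⟨by rw [mul_assoc, (ha x hx).1, mul_zero],
      by rw [← mul_assoc, (ha (x * r) (hr r x hx)).2]⟩)
    (fun {a r} ha x hx ↦ ⟨by rw [mul_assoc, (ha (r * x) (hl r x hx)).1],
      by rw [← mul_assoc, (ha x hx).2, zero_mul]⟩)

theorem mem_perpIdeal {A : Type*} [NonUnitalRing A] (X : Set A) (hl hr) (a : A) :
    a ∈ perpIdeal X hl hr ↔ a ∈ perpSet X :=
  TwoSidedIdeal.mem_mk' _ _ _ _ _ _ a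

/-- If `A` is a ring with local units and `I` is a maximal two-sided ideal of `A`,
then either `I` is regular (`I = I^⊥⊥`) or `I^⊥ = {0}`. -/
theorem maximal_ideal_regular_or_perp_zero {A : Type*} [NonUnitalRing A]
    (hA : HasLocalUnits A) (I : TwoSidedIdeal A)
    (hne : I ≠ ⊤) (hmax : ∀ J : TwoSidedIdeal A, I ≤ J → J = I ∨ J = ⊤) :
    perpSet (perpSet (I : Set A)) = (I : Set A) ∨ perpSet (I : Set A) = {0} := by
  -- perp I is an ideal
  have hIl : ∀ r : A, ∀ x ∈ (I : Set A), r * x ∈ (I : Set A) :=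
    fun r x hx ↦ I.mul_mem_left r x hx
  have hIr : ∀ r : A, ∀ x ∈ (I : Set A), x * r ∈ (I : Set A) :=
    fun r x hx ↦ I.mul_mem_right x r hx
  set P := perpIdeal (I : Set A) hIl hIr with hP
  have hPl : ∀ r : A, ∀ x ∈ perpSet (I : Set A), r * x ∈ perpSet (I : Set A) := by
    intro r x hx
    have := P.mul_mem_left r x ((mem_perpIdeal _ _ _ x).2 hx)
    exact (mem_perpIdeal _ _ _ _).1 this
  have hPr : ∀ r : A, ∀ x ∈ perpSet (I : Set A), x * r ∈ perpSet (I : Set A) := by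
    intro r x hx
    have := P.mul_mem_right x r ((mem_perpIdeal _ _ _ x).2 hx)
    exact (mem_perpIdeal _ _ _ _).1 this
  set J := perpIdeal (perpSet (I : Set A)) hPl hPr with hJ
  have hJcoe : (J : Set A) = perpSet (perpSet (I : Set A)) :=
    TwoSidedIdeal.coe_mk' _ _ _ _ _ _
  have hIJ : I ≤ J := by
    intro x hx
    refine (mem_perpIdeal _ _ _ x).2 ?_
    intro y hy
    exact ⟨(hy x hx).2, (hy x hx).1⟩
  rcases hmax J hIJ with h | h
  · left
    rw [← hJcoe, h]
  · right
    ext a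
    simp only [Set.mem_singleton_iff]
    constructor
    · intro ha
      obtain ⟨e, -, he⟩ := hA {a}
      have hea : e * a = a := (he a (Finset.mem_singleton_self a)).1
      have heJ : e ∈ J := by rw [h]; trivial
      have heJ' := (mem_perpIdeal _ _ _ e).1 heJ
      have := (heJ' a ha).1
      rw [hea] at this
      exact this
    · rintro rfl
      intro x hx
      exact ⟨zero_mul x, mul_zero x⟩
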